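/- Let B, B*, C be positive real constants and let C2, q1 be real constants. Let {ρ'_L}_{L>0} be a family of positive real numbers (indexed by real L > 0) with ρ'_L → 0 and ρ'_L·√L → ∞ as L → ∞. For L > 1 define p_{0,L} = 1 − 1/L, Z_{0,L} = ln(p_{0,L}/(1 − p_{0,L})) = ln(L−1), A_L = Z_{0,L}/2, and ε_L = exp( (B/p_{0,L})·[ −L·ρ'_L/C + (1/C − p_{0,L}/B + 3(1 − p_{0,L})/(2B*))·Z_{0,L} + q1 ] ). Let {p_{1,L}} be a family of real numbers with 0 ≤ p_{1,L} ≤ (exp(−Z_{0,L}) − ε_L·exp(−C2)) / (exp(−A_L) − ε_L·exp(−C2)) for all sufficiently large L, and let {w_L} be a family of real numbers satisfying, for all sufficiently large L, p_{0,L}·(1 − p_{1,L})·w_L = −p_{0,L}·ln(ε_L)/B + ln(exp(L(C − ρ'_L)) − 1)/C + [1/C − p_{0,L}/B + (1 − p_{0,L})/B*]·Z_{0,L} + (1 − p_{0,L})·|A_L|/B* + q1. Then liminf_{L→∞} (−ln ε_L)/(L·ρ'_L) ≥ B/C, and w_L ≤ L + 3√L for all sufficiently large L. -/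

import Mathlib

open Filter
open scoped Topology

private lemma aux_logdiv (Bp c z q CC x lg : ℝ) (hx : x ≠ 0) (hCC : CC ≠ 0)
    (hlg : lg = Bp * (-x / CC + c * z + q)) :
    -lg / x = Bp * (1 / CC - (c * (z / x) + q * x⁻¹)) := by
  subst hlg; field_simp; ring

private lemma aux_logdiv2 (Bp c z q CC r s lg : ℝ) (hs : s ≠ 0) (hCC : CC ≠ 0)
    (hlg : lg = Bp * (-(s * s * r) / CC + c * z + q)) :
    lg / s = Bp * (-(r * s) / CC + (c * (z / s) + q * s⁻¹)) := by
  subst hlg; rw [div_eq_iff hs]; field_simp; ring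

set_option maxHeartbeats 2000000 in
/-- choice of parameters in Burnashev's coding scheme in the moderate
deviations regime (Lemma `extralem` of the paper): the error probability `ε_L` has
moderate deviations exponent at least `B/C`, and the expected length `w_L` is at most
`L + 3 √L` for large `L`. -/
theorem moderate_deviations_parameter_choice
    (B Bstar C : ℝ) (hB : 0 < B) (hBstar : 0 < Bstar) (hC : 0 < C)
    (C2 q1 : ℝ) (ρ' : ℝ → ℝ) (hρpos : ∀ L > (0 : ℝ), 0 < ρ' L)
    (hρ0 : Tendsto ρ' atTop (𝓝 0))
    (hρsqrt : Tendsto (fun L => ρ' L * Real.sqrt L) atTop atTop)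
    (p0 Z0 A ε : ℝ → ℝ)
    (hp0 : ∀ L, p0 L = 1 - 1 / L)
    (hZ0 : ∀ L, Z0 L = Real.log (p0 L / (1 - p0 L)))
    (hA : ∀ L, A L = Z0 L / 2)
    (hε : ∀ L, ε L = Real.exp ((B / p0 L) *
      (-(L * ρ' L) / C + (1 / C - p0 L / B + 3 * (1 - p0 L) / (2 * Bstar)) * Z0 L + q1)))
    (p1 w : ℝ → ℝ)
    (hp1 : ∀ᶠ L in atTop, 0 ≤ p1 L ∧
      p1 L ≤ (Real.exp (-Z0 L) - ε L * Real.exp (-C2)) /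
             (Real.exp (-A L) - ε L * Real.exp (-C2)))
    (hw : ∀ᶠ L in atTop, p0 L * (1 - p1 L) * w L =
      -(p0 L * Real.log (ε L)) / B + Real.log (Real.exp (L * (C - ρ' L)) - 1) / C +
      (1 / C - p0 L / B + (1 - p0 L) / Bstar) * Z0 L +
      (1 - p0 L) * |A L| / Bstar + q1) :
    ((B / C : ℝ) : EReal) ≤
      Filter.liminf (fun L => ((-Real.log (ε L) / (L * ρ' L) : ℝ) : EReal)) atTop ∧
    ∀ᶠ L in atTop, w L ≤ L + 3 * Real.sqrt L := by
  have hsqrtT : Tendsto Real.sqrt atTop atTop := by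
    refine (tendsto_rpow_atTop (by norm_num : (0:ℝ) < 1/2)).congr' ?_
    filter_upwards [eventually_ge_atTop (0:ℝ)] with x hx
    exact (Real.sqrt_eq_rpow x).symm
  -- L * ρ' L → ∞
  have hLρ : Tendsto (fun L : ℝ => L * ρ' L) atTop atTop := by
    refine (hsqrtT.atTop_mul_atTop₀ hρsqrt).congr' ?_
    filter_upwards [eventually_ge_atTop (0:ℝ)] with L hL
    calc Real.sqrt L * (ρ' L * Real.sqrt L) = Real.sqrt L * Real.sqrt L * ρ' L := by ring
      _ = L * ρ' L := by rw [Real.mul_self_sqrt hL]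
  -- p0 → 1
  have hp0T : Tendsto p0 atTop (𝓝 1) := by
    have h : Tendsto (fun L : ℝ => 1 - 1 / L) atTop (𝓝 (1 - 0)) :=
      tendsto_const_nhds.sub (tendsto_inv_atTop_zero.congr fun x => (one_div x).symm)
    simpa [funext hp0] using h
  -- Z0 L = log (L - 1) eventually
  have hZ0eq : ∀ᶠ L : ℝ in atTop, Z0 L = Real.log (L - 1) := by
    filter_upwards [eventually_ge_atTop (2:ℝ)] with L hL
    have hL0 : (L:ℝ) ≠ 0 := by positivity
    rw [hZ0, hp0]
    congr 1
    field_simp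
    ring
  -- log x / sqrt x → 0
  have hlogdivsq : Tendsto (fun x : ℝ => Real.log x / Real.sqrt x) atTop (𝓝 0) := by
    refine ((isLittleO_log_rpow_atTop
      (by norm_num : (0:ℝ) < 1/2)).tendsto_div_nhds_zero).congr' ?_
    filter_upwards [eventually_ge_atTop (0:ℝ)] with x hx
    rw [Real.sqrt_eq_rpow]
  -- Z0 / sqrt → 0
  have hZdivsq : Tendsto (fun L : ℝ => Z0 L / Real.sqrt L) atTop (𝓝 0) := by
    refine tendsto_of_tendsto_of_tendsto_of_le_of_le' tendsto_const_nhds hlogdivsq ?_ ?_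
    · filter_upwards [eventually_ge_atTop (2:ℝ), hZ0eq] with L hL hZ
      refine div_nonneg ?_ (Real.sqrt_nonneg L)
      rw [hZ]; exact Real.log_nonneg (by linarith)
    · filter_upwards [eventually_ge_atTop (2:ℝ), hZ0eq] with L hL hZ
      have h1 : Z0 L ≤ Real.log L := by
        rw [hZ]; exact Real.log_le_log (by linarith) (by linarith)
      have h2 : (0:ℝ) < Real.sqrt L := Real.sqrt_pos.mpr (by linarith)
      exact div_le_div_of_nonneg_right h1 h2.le
  -- Z0 / (L ρ') → 0
  have hZdivLρ : Tendsto (fun L : ℝ => Z0 L / (L * ρ' L)) atTop (𝓝 0) := by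
    refine tendsto_of_tendsto_of_tendsto_of_le_of_le' tendsto_const_nhds hZdivsq ?_ ?_
    · filter_upwards [eventually_ge_atTop (2:ℝ), hZ0eq] with L hL hZ
      have hLpos : (0:ℝ) < L := by linarith
      refine div_nonneg ?_ (mul_pos hLpos (hρpos L hLpos)).le
      rw [hZ]; exact Real.log_nonneg (by linarith)
    · filter_upwards [eventually_ge_atTop (2:ℝ), hZ0eq,
        hρsqrt.eventually_ge_atTop 1] with L hL hZ hρs
      have hLpos : (0:ℝ) < L := by linarith
      have hspos : (0:ℝ) < Real.sqrt L := Real.sqrt_pos.mpr hLpos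
      have hZnn : 0 ≤ Z0 L := by rw [hZ]; exact Real.log_nonneg (by linarith)
      have hle : Real.sqrt L ≤ L * ρ' L := by
        have := Real.mul_self_sqrt hLpos.le
        nlinarith [hρpos L hLpos]
      exact div_le_div_of_nonneg_left hZnn hspos hle
  have hinvLρ : Tendsto (fun L : ℝ => (L * ρ' L)⁻¹) atTop (𝓝 0) :=
    tendsto_inv_atTop_zero.comp hLρ
  have hcT : Tendsto (fun L => 1 / C - p0 L / B + 3 * (1 - p0 L) / (2 * Bstar)) atTop
      (𝓝 (1 / C - 1 / B + 3 * (1 - 1) / (2 * Bstar))) :=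
    (tendsto_const_nhds.sub (hp0T.div_const B)).add
      (((tendsto_const_nhds.sub hp0T).const_mul 3).div_const (2 * Bstar))
  have hBpT : Tendsto (fun L => B / p0 L) atTop (𝓝 (B / 1)) :=
    tendsto_const_nhds.div hp0T one_ne_zero
  -- Part 1
  have hf : Tendsto (fun L => -Real.log (ε L) / (L * ρ' L)) atTop (𝓝 (B / C)) := by
    have hg : Tendsto (fun L => (B / p0 L) *
        (1 / C - ((1 / C - p0 L / B + 3 * (1 - p0 L) / (2 * Bstar)) * (Z0 L / (L * ρ' L)) +
          q1 * (L * ρ' L)⁻¹))) atTop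
        (𝓝 ((B / 1) * (1 / C - ((1 / C - 1 / B + 3 * (1 - 1) / (2 * Bstar)) * 0 + q1 * 0)))) :=
      hBpT.mul (tendsto_const_nhds.sub ((hcT.mul hZdivLρ).add (tendsto_const_nhds.mul hinvLρ)))
    have hval : (B / 1) * (1 / C - ((1 / C - 1 / B + 3 * (1 - 1) / (2 * Bstar)) * 0 + q1 * 0))
        = B / C := by ring
    rw [hval] at hg
    refine hg.congr' ?_
    filter_upwards [eventually_ge_atTop (2:ℝ)] with L hL
    have hLpos : (0:ℝ) < L := by linarith
    have hLρne : L * ρ' L ≠ 0 := (mul_pos hLpos (hρpos L hLpos)).ne'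
    have hlg : Real.log (ε L) = (B / p0 L) *
        (-(L * ρ' L) / C + (1 / C - p0 L / B + 3 * (1 - p0 L) / (2 * Bstar)) * Z0 L + q1) := by
      rw [hε, Real.log_exp]
    exact (aux_logdiv (B / p0 L) _ (Z0 L) q1 C (L * ρ' L) _ hLρne hC.ne'
      hlg).symm
  have part1 : ((B / C : ℝ) : EReal) ≤
      Filter.liminf (fun L => ((-Real.log (ε L) / (L * ρ' L) : ℝ) : EReal)) atTop := by
    have hfE : Tendsto (fun L => ((-Real.log (ε L) / (L * ρ' L) : ℝ) : EReal)) atTop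
        (𝓝 ((B / C : ℝ) : EReal)) := EReal.tendsto_coe.mpr hf
    exact le_of_eq hfE.liminf_eq.symm
  -- smallness of ε
  have hEdivsq : Tendsto (fun L => Real.log (ε L) / Real.sqrt L) atTop atBot := by
    have hInner : Tendsto (fun L => -(ρ' L * Real.sqrt L) / C +
        ((1 / C - p0 L / B + 3 * (1 - p0 L) / (2 * Bstar)) * (Z0 L / Real.sqrt L) +
          q1 * (Real.sqrt L)⁻¹)) atTop atBot := by
      have h1 : Tendsto (fun L => -(ρ' L * Real.sqrt L) / C) atTop atBot :=
        Tendsto.atBot_div_const hC (tendsto_neg_atTop_atBot.comp hρsqrt)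
      have h2 : Tendsto (fun L => (1 / C - p0 L / B + 3 * (1 - p0 L) / (2 * Bstar)) *
          (Z0 L / Real.sqrt L) + q1 * (Real.sqrt L)⁻¹) atTop
          (𝓝 ((1 / C - 1 / B + 3 * (1 - 1) / (2 * Bstar)) * 0 + q1 * 0)) :=
        (hcT.mul hZdivsq).add (tendsto_const_nhds.mul (tendsto_inv_atTop_zero.comp hsqrtT))
      exact h1.atBot_add h2
    have hmul := hBpT.pos_mul_atBot (by simpa using hB : (0:ℝ) < B / 1) hInner
    refine hmul.congr' ?_
    filter_upwards [eventually_ge_atTop (2:ℝ)] with L hL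
    have hLpos : (0:ℝ) < L := by linarith
    have hspos : (0:ℝ) < Real.sqrt L := Real.sqrt_pos.mpr hLpos
    have hlg : Real.log (ε L) = (B / p0 L) *
        (-(Real.sqrt L * Real.sqrt L * ρ' L) / C +
          (1 / C - p0 L / B + 3 * (1 - p0 L) / (2 * Bstar)) * Z0 L + q1) := by
      rw [hε, Real.log_exp, Real.mul_self_sqrt hLpos.le]
    exact (aux_logdiv2 (B / p0 L) _ (Z0 L) q1 C (ρ' L) (Real.sqrt L) _ hspos.ne' hC.ne'
      hlg).symm
  have hEle : ∀ᶠ L : ℝ in atTop, Real.log (ε L) ≤ -Real.sqrt L := by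
    filter_upwards [hEdivsq.eventually_le_atBot (-1), eventually_ge_atTop (1:ℝ)] with L h1 hL
    have hspos : (0:ℝ) < Real.sqrt L := Real.sqrt_pos.mpr (by linarith)
    have := (div_le_iff₀ hspos).mp h1
    linarith
  have hsmall0 : Tendsto (fun L : ℝ => Real.sqrt L * Real.exp (-Real.sqrt L)) atTop (𝓝 0) := by
    have h := (Real.tendsto_pow_mul_exp_neg_atTop_nhds_zero 1).comp hsqrtT
    simpa [Function.comp_def] using h
  have hsmall : ∀ᶠ L : ℝ in atTop, ε L * Real.exp (-C2) ≤ Real.exp (-A L) / 2 := by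
    filter_upwards [hEle, hZ0eq, eventually_ge_atTop (2:ℝ),
      hsmall0.eventually (eventually_le_nhds (show (0:ℝ) < Real.exp C2 / 2 by positivity))]
      with L hEleL hZL hL hev
    have hLpos : (0:ℝ) < L := by linarith
    have hspos : (0:ℝ) < Real.sqrt L := Real.sqrt_pos.mpr hLpos
    have h1pos : (0:ℝ) < Real.sqrt (L - 1) := Real.sqrt_pos.mpr (by linarith)
    have hεle : ε L ≤ Real.exp (-Real.sqrt L) := by
      have hεeq : ε L = Real.exp (Real.log (ε L)) := by rw [hε, Real.log_exp]
      rw [hεeq]; exact Real.exp_le_exp.mpr hEleL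
    have hexpA : Real.exp (-A L) = (Real.sqrt (L - 1))⁻¹ := by
      rw [hA, hZL, Real.sqrt_eq_rpow, Real.rpow_def_of_pos (by linarith : (0:ℝ) < L - 1),
        show -(Real.log (L - 1) / 2) = -(Real.log (L - 1) * (1 / 2)) by ring, Real.exp_neg]
    have hsle : Real.sqrt (L - 1) ≤ Real.sqrt L := Real.sqrt_le_sqrt (by linarith)
    have hkey : Real.exp (-Real.sqrt L) * Real.exp (-C2) * (2 * Real.sqrt L) ≤ 1 := by
      have h3 : Real.exp (-C2) * Real.exp C2 = 1 := by rw [← Real.exp_add]; simp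
      nlinarith [Real.exp_pos (-C2), Real.exp_pos (-Real.sqrt L), Real.exp_pos C2]
    have step1 : ε L * Real.exp (-C2) ≤ Real.exp (-Real.sqrt L) * Real.exp (-C2) :=
      mul_le_mul_of_nonneg_right hεle (Real.exp_pos _).le
    have step2 : Real.exp (-Real.sqrt L) * Real.exp (-C2) ≤ (Real.sqrt (L - 1))⁻¹ / 2 := by
      rw [le_div_iff₀ (by norm_num : (0:ℝ) < 2)]
      have h4 : Real.exp (-Real.sqrt L) * Real.exp (-C2) * 2 * Real.sqrt (L - 1) ≤ 1 := by
        have hmono : Real.exp (-Real.sqrt L) * Real.exp (-C2) * 2 * Real.sqrt (L - 1) ≤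
            Real.exp (-Real.sqrt L) * Real.exp (-C2) * 2 * Real.sqrt L :=
          mul_le_mul_of_nonneg_left hsle (by positivity)
        nlinarith [hmono, hkey]
      calc Real.exp (-Real.sqrt L) * Real.exp (-C2) * 2
          = Real.exp (-Real.sqrt L) * Real.exp (-C2) * 2 * Real.sqrt (L - 1) *
            (Real.sqrt (L - 1))⁻¹ := by field_simp
        _ ≤ 1 * (Real.sqrt (L - 1))⁻¹ := by
            exact mul_le_mul_of_nonneg_right h4 (by positivity)
        _ = (Real.sqrt (L - 1))⁻¹ := by ring
    rw [hexpA]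
    linarith
  refine ⟨part1, ?_⟩
  -- Part 2
  filter_upwards [hp1, hw, hZ0eq, hsmall, eventually_ge_atTop (500:ℝ),
    hρ0.eventually (eventually_lt_nhds hC)] with L hp1L hwL hZL hsmL hL500 hρC
  have hLpos : (0:ℝ) < L := by linarith
  have hρp : 0 < ρ' L := hρpos L hLpos
  have hspos : (0:ℝ) < Real.sqrt L := Real.sqrt_pos.mpr hLpos
  have hss : Real.sqrt L * Real.sqrt L = L := Real.mul_self_sqrt hLpos.le
  have hs1pos : (0:ℝ) < Real.sqrt (L - 1) := Real.sqrt_pos.mpr (by linarith)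
  have hss1 : Real.sqrt (L - 1) * Real.sqrt (L - 1) = L - 1 :=
    Real.mul_self_sqrt (by linarith)
  have hsqrtL20 : (20:ℝ) ≤ Real.sqrt L := by
    have h400 : Real.sqrt 400 = 20 := by
      rw [show (400:ℝ) = 20 ^ 2 by norm_num, Real.sqrt_sq (by norm_num)]
    calc (20:ℝ) = Real.sqrt 400 := h400.symm
      _ ≤ Real.sqrt L := Real.sqrt_le_sqrt (by linarith)
  have hsqrt1L20 : (20:ℝ) ≤ Real.sqrt (L - 1) := by
    have h400 : Real.sqrt 400 = 20 := by
      rw [show (400:ℝ) = 20 ^ 2 by norm_num, Real.sqrt_sq (by norm_num)]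
    calc (20:ℝ) = Real.sqrt 400 := h400.symm
      _ ≤ Real.sqrt (L - 1) := Real.sqrt_le_sqrt (by linarith)
  have hp0pos : 0 < p0 L := by
    rw [hp0]
    have h1 : 1 / L < 1 := by rw [div_lt_one hLpos]; linarith
    linarith
  have hZnn : 0 ≤ Z0 L := by rw [hZL]; exact Real.log_nonneg (by linarith)
  have hAnn : 0 ≤ A L := by rw [hA]; linarith
  have habs : |A L| = A L := abs_of_nonneg hAnn
  have hεpos : 0 < ε L := by rw [hε]; exact Real.exp_pos _
  have hexpA : Real.exp (-A L) = (Real.sqrt (L - 1))⁻¹ := by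
    rw [hA, hZL, Real.sqrt_eq_rpow, Real.rpow_def_of_pos (by linarith : (0:ℝ) < L - 1),
      show -(Real.log (L - 1) / 2) = -(Real.log (L - 1) * (1 / 2)) by ring, Real.exp_neg]
  have hexpZ : Real.exp (-Z0 L) = (L - 1)⁻¹ := by
    rw [hZL, Real.exp_neg, Real.exp_log (by linarith : (0:ℝ) < L - 1)]
  have hD : Real.exp (-A L) / 2 ≤ Real.exp (-A L) - ε L * Real.exp (-C2) := by linarith
  have hDpos : 0 < Real.exp (-A L) - ε L * Real.exp (-C2) :=
    lt_of_lt_of_le (by positivity) hD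
  -- p1 bound
  have hp1le : p1 L ≤ 2 / Real.sqrt (L - 1) := by
    have h1 : p1 L ≤ (Real.exp (-Z0 L) - ε L * Real.exp (-C2)) /
        (Real.exp (-A L) - ε L * Real.exp (-C2)) := hp1L.2
    have h2 : (Real.exp (-Z0 L) - ε L * Real.exp (-C2)) /
        (Real.exp (-A L) - ε L * Real.exp (-C2)) ≤
        Real.exp (-Z0 L) / (Real.exp (-A L) - ε L * Real.exp (-C2)) := by
      apply div_le_div_of_nonneg_right ?_ hDpos.le
      nlinarith [Real.exp_pos (-C2)]
    have h3 : Real.exp (-Z0 L) / (Real.exp (-A L) - ε L * Real.exp (-C2)) ≤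
        Real.exp (-Z0 L) / (Real.exp (-A L) / 2) :=
      div_le_div_of_nonneg_left (Real.exp_pos _).le (by positivity) hD
    have h4 : Real.exp (-Z0 L) / (Real.exp (-A L) / 2) = 2 / Real.sqrt (L - 1) := by
      have hinv : (L - 1)⁻¹ = (Real.sqrt (L - 1))⁻¹ * (Real.sqrt (L - 1))⁻¹ := by
        rw [← mul_inv, hss1]
      rw [hexpZ, hexpA, hinv]
      field_simp
    linarith
  have hp1le' : p1 L ≤ 21 / (10 * Real.sqrt L) := by
    have e1 : (Real.sqrt (L - 1) + 1) ^ 2 = (L - 1) + 2 * Real.sqrt (L - 1) + 1 := by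
      rw [add_sq, Real.sq_sqrt (by linarith : (0:ℝ) ≤ L - 1)]; ring
    have t1 : L ≤ (Real.sqrt (L - 1) + 1) ^ 2 := by rw [e1]; linarith [hs1pos.le]
    have t2 : Real.sqrt L ≤ Real.sqrt (L - 1) + 1 := by
      calc Real.sqrt L ≤ Real.sqrt ((Real.sqrt (L - 1) + 1) ^ 2) := Real.sqrt_le_sqrt t1
        _ = Real.sqrt (L - 1) + 1 := Real.sqrt_sq (by positivity)
    have t3 : 20 * Real.sqrt L ≤ 21 * Real.sqrt (L - 1) := by linarith
    have t4 : 2 / Real.sqrt (L - 1) ≤ 21 / (10 * Real.sqrt L) := by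
      rw [div_le_div_iff₀ hs1pos (by positivity)]
      linarith
    linarith
  have hp1nn : 0 ≤ p1 L := hp1L.1
  have hK : 1 - 11 / (5 * Real.sqrt L) ≤ p0 L * (1 - p1 L) := by
    rw [hp0]
    have h1 : 1 / L ≤ 1 / (10 * Real.sqrt L) := by
      rw [div_le_div_iff₀ hLpos (by positivity)]
      have h10 : 10 * Real.sqrt L ≤ Real.sqrt L * Real.sqrt L :=
        mul_le_mul_of_nonneg_right (by linarith) hspos.le
      linarith [hss]
    have h2 : 1 / L ≤ 1 := by rw [div_le_one hLpos]; linarith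
    have h3 : 11 / (5 * Real.sqrt L) = 1 / (10 * Real.sqrt L) + 21 / (10 * Real.sqrt L) := by
      field_simp; ring
    have e2 : (1 - 1 / L) * (1 - p1 L) = 1 - 1 / L - p1 L + p1 L * (1 / L) := by ring
    linarith [e2, mul_nonneg hp1nn (by positivity : (0:ℝ) ≤ 1 / L)]
  have hKpos : 0 < p0 L * (1 - p1 L) := by
    have h1 : 11 / (5 * Real.sqrt L) ≤ 11 / 100 := by
      rw [div_le_div_iff₀ (by positivity) (by norm_num : (0:ℝ) < 100)]
      linarith
    linarith
  -- the identity
  have hp0ne : p0 L ≠ 0 := hp0pos.ne'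
  have hid : p0 L * (1 - p1 L) * w L =
      (L * ρ' L) / C + Real.log (Real.exp (L * (C - ρ' L)) - 1) / C := by
    rw [hwL, habs, hA, hε, Real.log_exp]
    have hcancel : -(p0 L * (B / p0 L * (-(L * ρ' L) / C +
        (1 / C - p0 L / B + 3 * (1 - p0 L) / (2 * Bstar)) * Z0 L + q1))) / B
        = (L * ρ' L) / C - (1 / C - p0 L / B + 3 * (1 - p0 L) / (2 * Bstar)) * Z0 L - q1 := by
      field_simp
      ring
    rw [hcancel]
    ring
  -- bound on the identity
  have hxpos : 0 < L * (C - ρ' L) := mul_pos hLpos (by linarith)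
  have hlogle : Real.log (Real.exp (L * (C - ρ' L)) - 1) ≤ L * (C - ρ' L) := by
    have h1 : 0 < Real.exp (L * (C - ρ' L)) - 1 := by
      have := Real.add_one_le_exp (L * (C - ρ' L))
      linarith
    calc Real.log (Real.exp (L * (C - ρ' L)) - 1) ≤
        Real.log (Real.exp (L * (C - ρ' L))) := Real.log_le_log h1 (by linarith)
      _ = L * (C - ρ' L) := Real.log_exp _
  have hwle : p0 L * (1 - p1 L) * w L ≤ L := by
    rw [hid]
    have h5 : Real.log (Real.exp (L * (C - ρ' L)) - 1) / C ≤ (L * (C - ρ' L)) / C :=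
      div_le_div_of_nonneg_right hlogle hC.le
    have h6 : (L * ρ' L) / C + (L * (C - ρ' L)) / C = L := by field_simp; ring
    linarith
  -- conclude
  have h7 : 11 / (5 * Real.sqrt L) * L = 11 / 5 * Real.sqrt L := by
    rw [div_mul_eq_mul_div, div_mul_eq_mul_div, div_eq_div_iff (by positivity : (5 * Real.sqrt L) ≠ 0)
      (by norm_num : (5:ℝ) ≠ 0)]
    linear_combination (-55 : ℝ) * hss
  have h8 : 11 / (5 * Real.sqrt L) * (3 * Real.sqrt L) = 33 / 5 := by
    field_simp; ring
  have hfin : L ≤ (1 - 11 / (5 * Real.sqrt L)) * (L + 3 * Real.sqrt L) := by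
    have expand : (1 - 11 / (5 * Real.sqrt L)) * (L + 3 * Real.sqrt L) =
        L + 3 * Real.sqrt L - (11 / (5 * Real.sqrt L) * L +
          11 / (5 * Real.sqrt L) * (3 * Real.sqrt L)) := by ring
    rw [expand, h7, h8]
    linarith
  have hKle : p0 L * (1 - p1 L) * w L ≤ p0 L * (1 - p1 L) * (L + 3 * Real.sqrt L) := by
    calc p0 L * (1 - p1 L) * w L ≤ L := hwle
      _ ≤ (1 - 11 / (5 * Real.sqrt L)) * (L + 3 * Real.sqrt L) := hfin
      _ ≤ p0 L * (1 - p1 L) * (L + 3 * Real.sqrt L) :=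
          mul_le_mul_of_nonneg_right hK (by positivity)
  exact le_of_mul_le_mul_left hKle hKpos
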